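/- Let C : ℝ^k → ℝ be twice continuously differentiable, let λ > 1, let η_P, η_Q ∈ ℝ^k, and let H ≥ 0 be such that the operator norm of the Hessian satisfies ‖∇²C(η)‖ ≤ H for every η in the segment set {η_P + x·(η_P − η_Q) : x ∈ ℝ, |x| ≤ max(1, λ−1)}. Then (C(λ·η_P + (1−λ)·η_Q) − λ·C(η_P))/(λ−1) + C(η_Q) ≤ λ·H·‖η_P − η_Q‖². In particular, if C is the log-partition function of an exponential family and both parameters are normalizable, then D_λ(P_{η_P} ‖ P_{η_Q}) ≤ λ·H·‖η_P − η_Q‖². -/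

import Mathlib

/-!
STATEMENT 3: If `C : ℝ^k → ℝ` is twice continuously differentiable, `λ > 1`, and the
operator norm of the Hessian satisfies `‖∇²C(η)‖ ≤ H` on the segment set
`{η_P + x·(η_P − η_Q) : |x| ≤ max(1, λ−1)}`, then
`(C(λ·η_P + (1−λ)·η_Q) − λ·C(η_P))/(λ−1) + C(η_Q) ≤ λ·H·‖η_P − η_Q‖²`.
(For an exponential family log-partition function `C` this left-hand side is the Rényi
divergence `D_λ(P_{η_P}‖P_{η_Q})`.)
-/

theorem renyi_divergence_hessian_bound {k : ℕ}
    (C : EuclideanSpace ℝ (Fin k) → ℝ) (hC : ContDiff ℝ 2 C)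
    (l : ℝ) (hl : 1 < l) (ηP ηQ : EuclideanSpace ℝ (Fin k)) (H : ℝ) (hH : 0 ≤ H)
    (hHess : ∀ x : ℝ, |x| ≤ max 1 (l - 1) →
      ‖iteratedFDeriv ℝ 2 C (ηP + x • (ηP - ηQ))‖ ≤ H) :
    (C (l • ηP + (1 - l) • ηQ) - l * C ηP) / (l - 1) + C ηQ ≤ l * H * ‖ηP - ηQ‖ ^ 2 := by
  set v : EuclideanSpace ℝ (Fin k) := ηP - ηQ with hv
  set a : ℝ := max 1 (l - 1) with ha
  set M : ℝ := H * ‖v‖ ^ 2 with hM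
  have hM0 : 0 ≤ M := by positivity
  set φ : ℝ → EuclideanSpace ℝ (Fin k) := fun x => ηP + x • v with hφ
  have hφd : ∀ x : ℝ, HasDerivAt φ v x := by
    intro x
    have h := ((hasDerivAt_id x).smul_const v).const_add ηP
    simp only [one_smul] at h
    exact h
  have hCd : Differentiable ℝ C := hC.differentiable (by norm_num)
  have hCd' : Differentiable ℝ (fderiv ℝ C) :=
    (hC.fderiv_right (m := 1) (by norm_num)).differentiable (by norm_num)
  set f : ℝ → ℝ := fun x => C (φ x) with hf
  set f₁ : ℝ → ℝ := fun x => fderiv ℝ C (φ x) v with hf₁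
  set f₂ : ℝ → ℝ := fun x => fderiv ℝ (fderiv ℝ C) (φ x) v v with hf₂
  have hfd : ∀ x : ℝ, HasDerivAt f (f₁ x) x := fun x =>
    (hCd (φ x)).hasFDerivAt.comp_hasDerivAt x (hφd x)
  have hf₁d : ∀ x : ℝ, HasDerivAt f₁ (f₂ x) x := by
    intro x
    have h1 : HasDerivAt (fun x => fderiv ℝ C (φ x))
        (fderiv ℝ (fderiv ℝ C) (φ x) v) x :=
      (hCd' (φ x)).hasFDerivAt.comp_hasDerivAt x (hφd x)
    simpa using h1.clm_apply (hasDerivAt_const x v)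
  have hf₂b : ∀ x : ℝ, |x| ≤ a → |f₂ x| ≤ M := by
    intro x hx
    have h1 : f₂ x = iteratedFDeriv ℝ 2 C (φ x) ![v, v] := by
      rw [iteratedFDeriv_two_apply]; rfl
    have h2 : |iteratedFDeriv ℝ 2 C (φ x) ![v, v]| ≤
        ‖iteratedFDeriv ℝ 2 C (φ x)‖ * (‖v‖ * (‖v‖ * 1)) := by
      simpa [Fin.prod_univ_two] using
        (iteratedFDeriv ℝ 2 C (φ x)).le_opNorm ![v, v]
    rw [h1]
    calc |iteratedFDeriv ℝ 2 C (φ x) ![v, v]| ≤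
        ‖iteratedFDeriv ℝ 2 C (φ x)‖ * (‖v‖ * (‖v‖ * 1)) := h2
      _ ≤ H * (‖v‖ * (‖v‖ * 1)) := by
          apply mul_le_mul_of_nonneg_right (hHess x hx); positivity
      _ = M := by rw [hM]; ring
  have ha1 : (1:ℝ) ≤ a := le_max_left _ _
  have hla : l - 1 ≤ a := le_max_right _ _
  have hsconv : Convex ℝ (Set.Icc (-a) a) := convex_Icc _ _
  have hlip : ∀ x ∈ Set.Icc (-a) a, ∀ y ∈ Set.Icc (-a) a, |f₁ y - f₁ x| ≤ M * |y - x| := by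
    intro x hx y hy
    have := hsconv.norm_image_sub_le_of_norm_hasDerivWithin_le
      (f := f₁) (f' := f₂)
      (fun z hz => (hf₁d z).hasDerivWithinAt)
      (fun z hz => hf₂b z (abs_le.mpr ⟨hz.1, hz.2⟩)) hx hy
    simpa using this
  have htaylor : ∀ t : ℝ, |t| ≤ a → |f t - f 0 - t * f₁ 0| ≤ M * t ^ 2 := by
    intro t ht
    set g : ℝ → ℝ := fun x => f x - x * f₁ 0 with hg
    have hgd : ∀ x : ℝ, HasDerivAt g (f₁ x - f₁ 0) x := by
      intro x
      have h := (hfd x).sub ((hasDerivAt_id x).mul_const (f₁ 0))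
      simp only [one_mul] at h
      exact h
    have h0mem : (0:ℝ) ∈ Set.Icc (-a) a := ⟨by linarith, by linarith⟩
    have htmem : t ∈ Set.Icc (-a) a := abs_le.mp ht
    have hsub : Set.uIcc (0:ℝ) t ⊆ Set.Icc (-a) a :=
      Set.ordConnected_Icc.uIcc_subset h0mem htmem
    have hzt : ∀ z ∈ Set.uIcc (0:ℝ) t, |z| ≤ |t| := by
      intro z hz
      rcases le_total 0 t with h | h
      · rw [Set.uIcc_of_le h] at hz
        rw [abs_of_nonneg hz.1, abs_of_nonneg h]; exact hz.2
      · rw [Set.uIcc_of_ge h] at hz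
        rw [abs_of_nonpos hz.2, abs_of_nonpos h]; linarith [hz.1]
    have key := (convex_uIcc (0:ℝ) t).norm_image_sub_le_of_norm_hasDerivWithin_le
      (f := g) (f' := fun x => f₁ x - f₁ 0)
      (fun z hz => (hgd z).hasDerivWithinAt)
      (fun z hz => by
        have h1 := hlip 0 h0mem z (hsub hz)
        have h2 : M * |z - 0| ≤ M * |t| := by
          apply mul_le_mul_of_nonneg_left _ hM0
          simpa using hzt z hz
        simpa using h1.trans h2)
      (Set.left_mem_uIcc) (Set.right_mem_uIcc)
    have : |g t - g 0| ≤ M * |t| * |t| := by simpa using key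
    calc |f t - f 0 - t * f₁ 0| = |g t - g 0| := by rw [hg]; ring_nf
      _ ≤ M * |t| * |t| := this
      _ = M * t ^ 2 := by rw [mul_assoc, ← abs_mul, ← sq, abs_sq]
  have hab1 : |(-1:ℝ)| ≤ a := by rw [abs_neg, abs_one]; exact ha1
  have habl : |l - 1| ≤ a := by rw [abs_of_pos (by linarith)]; exact hla
  have hT1 := abs_le.mp (htaylor (l - 1) habl)
  have hT2 := abs_le.mp (htaylor (-1) hab1)
  have hf0 : f 0 = C ηP := by simp [hf, hφ]
  have hfl : f (l - 1) = C (l • ηP + (1 - l) • ηQ) := by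
    have : φ (l - 1) = l • ηP + (1 - l) • ηQ := by
      rw [hφ]; simp only [hv]; module
    exact congrArg C this
  have hfm1 : f (-1) = C ηQ := by
    have : φ (-1) = ηQ := by rw [hφ]; simp only [hv]; module
    exact congrArg C this
  rw [← hfl, ← hfm1, ← hf0]
  have hl1 : (0:ℝ) < l - 1 := by linarith
  have hgoal : l * H * ‖ηP - ηQ‖ ^ 2 = l * M := by rw [hM, hv]; ring
  rw [hgoal, div_add' _ _ _ (ne_of_gt hl1), div_le_iff₀ hl1]
  nlinarith [hT1.2, hT2.2, hl1, hM0]
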